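/- In an abelian category with N^op-limits satisfying AB4, the completion of any filtered object is itself a complete filtered object: the structure maps F_{e'} V̂ → F_e V̂ (for e' > e) are monomorphisms, and the natural map F_0 V̂ → lim_a coker(F_a V̂ → F_0 V̂) is an isomorphism. -/

import Mathlib

set_option linter.unusedSectionVars false
set_option linter.unusedVariables false


/-!
STATEMENT 1: In an abelian category with `ℕᵒᵖ`-limits satisfying AB4, the completion of any
filtered object is itself a complete filtered object: the structure maps
`F_{e'} V̂ → F_e V̂` (for `e' > e`) are monomorphisms, and the natural map
`F₀ V̂ → lim_a coker (F_a V̂ → F₀ V̂)` is an isomorphism.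
-/

open CategoryTheory CategoryTheory.Limits Opposite

universe v u

variable {A : Type u} [Category.{v} A] [Abelian A]
  [HasCoproducts A] [AB4 A] [HasLimitsOfShape ℕᵒᵖ A]

/-- A filtered object: an `ℕᵒᵖ`-indexed diagram all of whose structure maps are monos. -/
def IsFilteredObj (V : ℕᵒᵖ ⥤ A) : Prop :=
  ∀ {a b : ℕᵒᵖ} (f : a ⟶ b), Mono (V.map f)

/-- The diagram `a ↦ coker (i_a : F_a V ⟶ F_0 V)`. -/
noncomputable def cokerDiagram (V : ℕᵒᵖ ⥤ A) : ℕᵒᵖ ⥤ A where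
  obj a := cokernel (V.map (homOfLE (Nat.zero_le a.unop)).op)
  map {a b} f := cokernel.map _ _ (V.map f) (𝟙 _) (by
    rw [Category.comp_id, ← V.map_comp]
    congr 1)
  map_id := by intro a; ext; simp
  map_comp := by intro a b c f g; ext; simp

/-- The completion `V̂` of a filtered object, with `F_e V̂ = ker (lim_a coker i_a → coker i_e)`. -/
noncomputable def completion (V : ℕᵒᵖ ⥤ A) : ℕᵒᵖ ⥤ A where
  obj e := kernel (limit.π (cokerDiagram V) e)
  map {a b} f := kernel.lift _ (kernel.ι _) (by
    rw [← limit.w (cokerDiagram V) f, ← Category.assoc, kernel.condition, zero_comp])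
  map_id := by intro a; ext; simp
  map_comp := by intro a b c f g; ext; simp

/-- The canonical map `F₀ W ⟶ lim_a coker (F_a W → F₀ W)`, induced by the cokernel
projections.  A filtered object `W` is complete when this map is an isomorphism. -/
noncomputable def toCompletionZero (W : ℕᵒᵖ ⥤ A) : W.obj (op 0) ⟶ limit (cokerDiagram W) :=
  limit.lift _
    { pt := W.obj (op 0)
      π :=
        { app := fun _ => cokernel.π _
          naturality := by
            intro a b f
            simp [cokerDiagram, cokernel.map] } }

/-- A filtered object is complete when the canonical map
`F₀ W → lim_a coker (F_a W → F₀ W)` is an isomorphism. -/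
def IsCompleteObj (W : ℕᵒᵖ ⥤ A) : Prop := IsIso (toCompletionZero W)

-- auxiliary lemmas

lemma cokerDiagram_π_map (W : ℕᵒᵖ ⥤ A) {a b : ℕᵒᵖ} (f : a ⟶ b) :
    cokernel.π (W.map (homOfLE (Nat.zero_le a.unop)).op) ≫ (cokerDiagram W).map f =
      cokernel.π (W.map (homOfLE (Nat.zero_le b.unop)).op) := by
  simp [cokerDiagram]

lemma completion_map_comp_ι (V : ℕᵒᵖ ⥤ A) {a b : ℕᵒᵖ} (f : a ⟶ b) :
    (completion V).map f ≫ kernel.ι (limit.π (cokerDiagram V) b) =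
      kernel.ι (limit.π (cokerDiagram V) a) := by
  simp [completion]

/-- The natural transformation `cokerDiagram (completion V) ⟶ cokerDiagram V`. -/
noncomputable def cokerComparison (V : ℕᵒᵖ ⥤ A) :
    cokerDiagram (completion V) ⟶ cokerDiagram V where
  app e := cokernel.desc _
    (kernel.ι (limit.π (cokerDiagram V) (op 0)) ≫ limit.π (cokerDiagram V) e)
    (by
      exact (Category.assoc _ _ _).symm.trans ((congrArg (· ≫ limit.π (cokerDiagram V) e)
          (completion_map_comp_ι V (homOfLE (Nat.zero_le e.unop)).op)).trans
        (kernel.condition _)))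
  naturality := by
    intro a b f
    apply coequalizer.hom_ext
    show cokernel.π _ ≫ _ = cokernel.π _ ≫ _
    erw [← Category.assoc, cokerDiagram_π_map, cokernel.π_desc, ← Category.assoc,
      cokernel.π_desc, Category.assoc, limit.w]

theorem statement1 (V : ℕᵒᵖ ⥤ A) (hV : IsFilteredObj V) :
    IsFilteredObj (completion V) ∧ IsCompleteObj (completion V) := by
  have mono_comp : IsFilteredObj (completion V) := by
    intro a b f
    have h := completion_map_comp_ι V f
    show Mono (kernel.lift (limit.π (cokerDiagram V) b) (kernel.ι (limit.π (cokerDiagram V) a)) _)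
    exact mono_of_mono_fac (kernel.lift_ι _ _ _)
  refine ⟨mono_comp, ?_⟩
  -- `ι₀ : F₀ V̂ ⟶ lim coker` is an isomorphism
  set L := limit (cokerDiagram V)
  have hzero : IsZero ((cokerDiagram V).obj (op 0)) := by
    have : IsIso (V.map (homOfLE (Nat.zero_le (unop (op (0:ℕ))))).op) := by
      have h : (homOfLE (Nat.zero_le (unop (op (0:ℕ))))).op = 𝟙 (op 0) := rfl
      rw [h, V.map_id]; infer_instance
    exact (isZero_zero A).of_iso (cokernel.ofEpi _)
  have hπ0 : limit.π (cokerDiagram V) (op 0) = 0 := hzero.eq_of_tgt _ _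
  have hιiso : IsIso (kernel.ι (limit.π (cokerDiagram V) (op 0))) := by
    refine ⟨kernel.lift _ (𝟙 L) (by rw [hπ0, comp_zero]), ?_, by simp; rfl⟩
    rw [← cancel_mono (kernel.ι (limit.π (cokerDiagram V) (op 0)))]
    simp
    exact Category.comp_id _
  -- each component of the comparison is mono
  have monoφ : ∀ e : ℕᵒᵖ, Mono ((cokerComparison V).app e) := by
    intro e
    set f := (completion V).map (homOfLE (Nat.zero_le e.unop)).op
    set g := kernel.ι (limit.π (cokerDiagram V) (op 0)) ≫ limit.π (cokerDiagram V) e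
    have w : f ≫ g = 0 := by
      exact (Category.assoc _ _ _).symm.trans ((congrArg (· ≫ limit.π (cokerDiagram V) e)
          (completion_map_comp_ι V (homOfLE (Nat.zero_le e.unop)).op)).trans
        (kernel.condition _))
    let S : ShortComplex A := ⟨f, g, w⟩
    have hS : S.Exact := by
      apply ShortComplex.exact_of_f_is_kernel
      refine KernelFork.IsLimit.ofι _ _
        (fun {T} x hx => kernel.lift _ (x ≫ kernel.ι _) ((Category.assoc _ _ _).trans hx))
        (fun {T} x hx => ?_) (fun {T} x hx m hm => ?_)
      · erw [← cancel_mono (kernel.ι (limit.π (cokerDiagram V) (op 0)))]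
        erw [Category.assoc]
        show _ ≫ f ≫ _ = _
        erw [completion_map_comp_ι, kernel.lift_ι]
        rfl
      · show m = kernel.lift (limit.π (cokerDiagram V) (op (unop e)))
          (x ≫ kernel.ι (limit.π (cokerDiagram V) (op 0))) _
        erw [← cancel_mono (kernel.ι (limit.π (cokerDiagram V) (op (unop e)))), kernel.lift_ι,
          ← hm, Category.assoc]
        congr 1
        exact (completion_map_comp_ι V (homOfLE (Nat.zero_le e.unop)).op).symm
    exact S.exact_iff_mono_cokernel_desc.mp hS
  have : ∀ e : ℕᵒᵖ, Mono ((cokerComparison V).app e) := monoφ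
  have monoLim : Mono (limMap (cokerComparison V)) := limMap_mono _
  -- composite equals `ι₀`
  have key : toCompletionZero (completion V) ≫ limMap (cokerComparison V) =
      kernel.ι (limit.π (cokerDiagram V) (op 0)) := by
    apply limit.hom_ext
    intro e
    simp [toCompletionZero, cokerComparison]
    exact cokernel.π_desc _ _ _
  rw [IsCompleteObj]
  obtain ⟨inv0, hinv1, hinv2⟩ := hιiso.out
  refine ⟨limMap (cokerComparison V) ≫ inv0, ?_, ?_⟩
  · exact (Category.assoc _ _ _).symm.trans ((congrArg (· ≫ inv0) key).trans hinv1)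
  · rw [← cancel_mono (limMap (cokerComparison V))]
    have e1 : (limMap (cokerComparison V) ≫ inv0) ≫ kernel.ι (limit.π (cokerDiagram V) (op 0)) =
        limMap (cokerComparison V) := by
      rw [Category.assoc, hinv2, Category.comp_id]
    exact (Category.assoc _ _ _).trans
      ((congrArg (fun t => (limMap (cokerComparison V) ≫ inv0) ≫ t) key).trans
      (e1.trans (Category.id_comp _).symm))
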